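/- Let σ, δ, γ > 0 be real numbers and let m>1, p>1. Define φ(F) = σF - δ - γ F^((p+m-2)/(m-1)) for F ∈ (0,1). If K σ^((p+m-2)/(p-1)) ≤ δ γ^((m-1)/(p-1)), where K = ((m-1)/(p+m-2))^((m-1)/(p-1)) - ((m-1)/(p+m-2))^((p+m-2)/(p-1)), and (m-1)σ ≤ (p+m-2)γ, then φ(F) ≤ 0 for all F ∈ (0,1). -/

import Mathlib

open Real

theorem stmt1 (m p σ δ γ : ℝ) (hm : 1 < m) (hp : 1 < p)
    (hσ : 0 < σ) (hδ : 0 < δ) (hγ : 0 < γ)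
    (hK : (((m - 1) / (p + m - 2)) ^ ((m - 1) / (p - 1)) -
        ((m - 1) / (p + m - 2)) ^ ((p + m - 2) / (p - 1))) * σ ^ ((p + m - 2) / (p - 1))
        ≤ δ * γ ^ ((m - 1) / (p - 1)))
    (hσγ : (m - 1) * σ ≤ (p + m - 2) * γ) :
    ∀ F ∈ Set.Ioo (0 : ℝ) 1, σ * F - δ - γ * F ^ ((p + m - 2) / (m - 1)) ≤ 0 := by
  intro F hF
  obtain ⟨hF0, hF1⟩ := hF
  have hm1 : (0:ℝ) < m - 1 := by linarith
  have hp1 : (0:ℝ) < p - 1 := by linarith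
  have hpm : (0:ℝ) < p + m - 2 := by linarith
  set α : ℝ := (p + m - 2) / (m - 1) with hα
  set β : ℝ := (p + m - 2) / (p - 1) with hβ
  set r : ℝ := (m - 1) / (p - 1) with hr
  set a : ℝ := (m - 1) / (p + m - 2) with ha
  have hαpos : 0 < α := div_pos hpm hm1
  have hα1 : 1 < α := by rw [hα, lt_div_iff₀ hm1]; linarith
  have hβpos : 0 < β := div_pos hpm hp1
  have hconj : α.HolderConjugate β := by
    refine Real.holderConjugate_iff.mpr ⟨hα1, ?_⟩
    rw [hα, hβ, inv_div, inv_div]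
    field_simp
    ring
  have ha0 : 0 < a := div_pos hm1 hpm
  have haα : a = α⁻¹ := by rw [ha, hα, inv_div]
  have hβr1 : β = r + 1 := by
    rw [hβ, hr]; field_simp; ring
  have haβ : a ^ β = a ^ r * a := by
    rw [hβr1, Real.rpow_add ha0, Real.rpow_one]
  have h1a : 1 - a = β⁻¹ := by
    rw [ha, hβ, inv_div]; field_simp; ring
  have hKeq : a ^ r - a ^ β = a ^ r / β := by
    rw [haβ, div_eq_mul_inv, ← h1a]; ring
  have hc : (0:ℝ) < α * γ := mul_pos hαpos hγ
  set c : ℝ := α * γ with hcdef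
  have hcpow : 0 < c ^ (α⁻¹) := Real.rpow_pos_of_pos hc _
  have young := Real.young_inequality_of_nonneg
    (mul_nonneg (le_of_lt hcpow) hF0.le)
    (le_of_lt (div_pos hσ hcpow)) hconj
  have hxy : c ^ α⁻¹ * F * (σ / c ^ α⁻¹) = σ * F := by
    field_simp
  have hx : (c ^ α⁻¹ * F) ^ α = c * F ^ α := by
    rw [Real.mul_rpow (le_of_lt hcpow) hF0.le, ← Real.rpow_mul hc.le,
      inv_mul_cancel₀ (ne_of_gt hαpos), Real.rpow_one]
  have hab : α⁻¹ * β = r := by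
    rw [← haα, ha, hβ, hr]; field_simp
  have hy : (σ / c ^ α⁻¹) ^ β = σ ^ β / c ^ r := by
    rw [Real.div_rpow hσ.le (le_of_lt hcpow), ← Real.rpow_mul hc.le, hab]
  rw [hxy, hx, hy] at young
  have hcF : c * F ^ α / α = γ * F ^ α := by
    rw [hcdef]; field_simp
  -- bound the second term by δ
  have hcr : c ^ r = α ^ r * γ ^ r := Real.mul_rpow hαpos.le hγ.le
  have hαinv : α = a⁻¹ := by rw [haα, inv_inv]
  have hαr : α ^ r = (a ^ r)⁻¹ := by
    rw [hαinv, Real.inv_rpow ha0.le]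
  have harpos : 0 < a ^ r := Real.rpow_pos_of_pos ha0 _
  have hγr : 0 < γ ^ r := Real.rpow_pos_of_pos hγ _
  have hδbound : σ ^ β / c ^ r / β ≤ δ := by
    rw [hKeq] at hK
    rw [hcr, hαr, div_div, div_le_iff₀ (by positivity)]
    rw [div_mul_eq_mul_div, div_le_iff₀ hβpos] at hK
    calc σ ^ β = a ^ r * σ ^ β * (a ^ r)⁻¹ := by field_simp
    _ ≤ δ * γ ^ r * β * (a ^ r)⁻¹ := by
        apply mul_le_mul_of_nonneg_right hK (by positivity)
    _ = δ * ((a ^ r)⁻¹ * γ ^ r * β) := by ring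
  rw [hcF] at young
  linarith
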